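/- arXiv:1901.08895 — 2 statements merged into one kernel-verified Lean document; each statement's English description precedes it below -/
import Mathlib

section
/- For every integer n ≥ 1, the alternating group 𝒜ₙ of even permutations of {1,…,n}, acting on {1,…,n}, is fixating if and only if n ≤ 4. That is: every subgroup G of 𝒜ₙ such that each permutation in G has a fixed point admits a point fixed by all of G, if and only if n ≤ 4. -/
open Equiv Equiv.Perm


namespace AltFixAux

private lemma lcomm {G : Type*} [Group G] {a b : G} (h : Commute a b) (w : G) :
    a * (b * w) = b * (a * w) := by
  rw [← mul_assoc, h.eq, mul_assoc]

variable (m : ℕ)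

def pp (k : ℕ) (h : k < 8 := by norm_num) : Fin (m + 8) := ⟨k, by omega⟩

def τ : Perm (Fin (m + 8)) := swap (pp m 0) (pp m 1)

def emb : Fin 3 ↪ Fin (m + 8) :=
  ⟨fun k => ⟨k.val + 2, by omega⟩, by
    intro a b h
    simp only [Fin.mk.injEq] at h
    exact Fin.ext (by omega)⟩

noncomputable def ι : Perm (Fin 3) →* Perm (Fin (m + 8)) := viaEmbeddingHom (emb m)

variable {m}

lemma emb_apply (k : Fin 3) : (emb m k : Fin (m + 8)).val = k.val + 2 := rfl

lemma ι_apply_emb (x : Perm (Fin 3)) (k : Fin 3) : (ι m x) (emb m k) = emb m (x k) :=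
  viaEmbedding_apply x (emb m) k

lemma ι_apply_out (x : Perm (Fin 3)) (q : Fin (m + 8)) (h : q.val < 2 ∨ 5 ≤ q.val) :
    (ι m x) q = q := by
  refine viaEmbedding_apply_of_notMem x (emb m) q ?_
  rintro ⟨k, rfl⟩
  have hk := k.isLt
  have : (emb m k).val = k.val + 2 := rfl
  omega

lemma sign_ι (x : Perm (Fin 3)) : sign (ι m x) = sign x := by
  simp [ι, viaEmbeddingHom_apply, viaEmbedding, sign_extendDomain]

lemma τ_out (q : Fin (m + 8)) (h : 2 ≤ q.val) : τ m q = q := by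
  refine swap_apply_of_ne_of_ne ?_ ?_ <;>
    · intro hq; rw [hq] at h; simp [pp] at h

lemma commute_ι_τ (x : Perm (Fin 3)) : Commute (ι m x) (τ m) := by
  apply Equiv.Perm.Disjoint.commute
  intro q
  by_cases h : q.val < 2
  · exact Or.inl (ι_apply_out x q (Or.inl h))
  · exact Or.inr (τ_out q (by omega))

def IsTail (c : Perm (Fin (m + 8))) : Prop := ∀ q : Fin (m + 8), q.val < 5 → c q = q

lemma commute_tail_ι {c : Perm (Fin (m + 8))} (hc : IsTail c) (x : Perm (Fin 3)) :
    Commute c (ι m x) := by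
  apply Equiv.Perm.Disjoint.commute
  intro q
  by_cases h : q.val < 5
  · exact Or.inl (hc q h)
  · exact Or.inr (ι_apply_out x q (Or.inr (by omega)))

lemma commute_tail_τ {c : Perm (Fin (m + 8))} (hc : IsTail c) : Commute c (τ m) := by
  apply Equiv.Perm.Disjoint.commute
  intro q
  by_cases h : q.val < 5
  · exact Or.inl (hc q h)
  · exact Or.inr (τ_out q (by omega))

variable (m)

noncomputable def θ : ℤˣ → Perm (Fin (m + 8)) := fun u => if u = 1 then 1 else τ m

variable {m}

lemma commute_ι_θ (x : Perm (Fin 3)) (u : ℤˣ) : Commute (ι m x) (θ m u) := by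
  rcases Int.units_eq_one_or u with rfl | rfl
  · simp [θ]
  · simpa [θ] using commute_ι_τ x

lemma commute_tail_θ {c : Perm (Fin (m + 8))} (hc : IsTail c) (u : ℤˣ) :
    Commute c (θ m u) := by
  rcases Int.units_eq_one_or u with rfl | rfl
  · simp [θ]
  · simpa [θ] using commute_tail_τ hc

lemma θ_mul (u v : ℤˣ) : θ m u * θ m v = θ m (u * v) := by
  have hτ : τ m * τ m = 1 := swap_mul_self _ _
  rcases Int.units_eq_one_or u with rfl | rfl <;>
    rcases Int.units_eq_one_or v with rfl | rfl <;>
      simp [θ, hτ]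

lemma θ_inv (u : ℤˣ) : (θ m u)⁻¹ = θ m u := by
  rcases Int.units_eq_one_or u with rfl | rfl <;> simp [θ, τ]

lemma sign_θ (u : ℤˣ) : sign (θ m u) = u := by
  rcases Int.units_eq_one_or u with rfl | rfl
  · simp [θ]
  · have h1 : θ m (-1) = τ m := if_neg (by decide)
    rw [h1, τ, sign_swap (by simp [pp, Fin.ext_iff])]

variable (m)

noncomputable def bad : Subgroup (Perm (Fin (m + 8))) where
  carrier := { g | ∃ x c, sign c = 1 ∧ IsTail c ∧ g = ι m x * θ m (sign x) * c }
  one_mem' := ⟨1, 1, by simp, fun q _ => rfl, by simp [θ]⟩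
  mul_mem' := by
    rintro a b ⟨x₁, c₁, hc₁, ht₁, rfl⟩ ⟨x₂, c₂, hc₂, ht₂, rfl⟩
    refine ⟨x₁ * x₂, c₁ * c₂, by simp [hc₁, hc₂], ?_, ?_⟩
    · intro q hq
      have := ht₂ q hq
      simp [Perm.mul_apply, this, ht₁ q hq]
    · rw [map_mul, map_mul, ← θ_mul]
      simp only [mul_assoc]
      rw [lcomm (commute_tail_ι ht₁ x₂), lcomm (commute_tail_θ ht₁ (sign x₂)),
        lcomm ((commute_ι_θ x₂ (sign x₁)).symm)]
  inv_mem' := by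
    rintro g ⟨x, c, hc, ht, rfl⟩
    have htinv : IsTail c⁻¹ := by
      intro q hq
      conv_lhs => rw [← ht q hq]
      exact c.symm_apply_apply q
    have hsx : sign x⁻¹ = sign x := by
      rw [map_inv]
      rcases Int.units_eq_one_or (sign x) with h | h <;> rw [h] <;> decide
    refine ⟨x⁻¹, c⁻¹, by simp [hc], htinv, ?_⟩
    rw [hsx, mul_inv_rev, mul_inv_rev, θ_inv, ← map_inv]
    simp only [mul_assoc]
    rw [lcomm (commute_tail_θ htinv (sign x)), (commute_tail_ι htinv x⁻¹).eq,
      lcomm ((commute_ι_θ x⁻¹ (sign x)).symm)]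


lemma bad_le_alternating : bad m ≤ alternatingGroup (Fin (m + 8)) := by
  rintro g ⟨x, c, hc, ht, rfl⟩
  rw [Equiv.Perm.mem_alternatingGroup, map_mul, map_mul, sign_ι, sign_θ, hc, mul_one]
  rcases Int.units_eq_one_or (sign x) with h | h <;> rw [h] <;> decide

lemma sign_neg_fp : ∀ x : Perm (Fin 3), sign x = -1 → ∃ k, x k = k := by decide

lemma theta_one : θ m (1 : ℤˣ) = 1 := if_pos rfl
lemma theta_neg : θ m (-1 : ℤˣ) = τ m := if_neg (by decide)

lemma bad_fp : ∀ g ∈ bad m, ∃ i, g i = i := by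
  rintro g ⟨x, c, hc, ht, rfl⟩
  rcases Int.units_eq_one_or (sign x) with h | h
  · refine ⟨pp m 0, ?_⟩
    rw [Perm.mul_apply, Perm.mul_apply, ht _ (by simp [pp]), h, theta_one]
    exact ι_apply_out x _ (Or.inl (by simp [pp]))
  · obtain ⟨k, hk⟩ := sign_neg_fp x h
    refine ⟨emb m k, ?_⟩
    have h5 : (emb m k).val < 5 := by have := k.isLt; rw [emb_apply]; omega
    rw [Perm.mul_apply, Perm.mul_apply, ht _ h5, h, theta_neg,
      τ_out _ (by rw [emb_apply]; omega), ι_apply_emb, hk]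

lemma bad_no_common : ¬ ∃ i, ∀ g ∈ bad m, g i = i := by
  rintro ⟨p, hp⟩
  by_cases h2 : p.val < 2
  · set x : Perm (Fin 3) := swap 0 1 with hxdef
    have hx : sign x = -1 := by decide
    have hmem : ι m x * θ m (sign x) * 1 ∈ bad m :=
      ⟨x, 1, map_one _, fun q _ => rfl, rfl⟩
    have hfix := hp _ hmem
    rw [mul_one, Perm.mul_apply, hx, theta_neg] at hfix
    have hp01 : p = pp m 0 ∨ p = pp m 1 := by
      have h01 : p.val = 0 ∨ p.val = 1 := by omega
      rcases h01 with h | h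
      · exact Or.inl (Fin.ext h)
      · exact Or.inr (Fin.ext h)
    rcases hp01 with rfl | rfl
    · rw [τ, swap_apply_left, ι_apply_out x _ (Or.inl (by simp [pp]))] at hfix
      exact absurd hfix (by simp [pp, Fin.ext_iff])
    · rw [τ, swap_apply_right, ι_apply_out x _ (Or.inl (by simp [pp]))] at hfix
      exact absurd hfix (by simp [pp, Fin.ext_iff])
  by_cases h5 : p.val < 5
  · set x : Perm (Fin 3) := swap 0 1 * swap 1 2 with hxdef
    have hx : sign x = 1 := by decide
    have hxk : ∀ k : Fin 3, x k ≠ k := by decide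
    have hmem : ι m x * θ m (sign x) * 1 ∈ bad m :=
      ⟨x, 1, map_one _, fun q _ => rfl, rfl⟩
    have hfix := hp _ hmem
    rw [mul_one, hx, theta_one, mul_one] at hfix
    set k : Fin 3 := ⟨p.val - 2, by omega⟩ with hkdef
    have hpk : emb m k = p := Fin.ext (by rw [emb_apply]; simp [hkdef]; omega)
    rw [← hpk, ι_apply_emb] at hfix
    exact hxk k ((emb m).injective hfix)
  · push_neg at h5
    obtain ⟨q, r, hq5, hr5, hpq, hpr, hqr⟩ :
        ∃ q r : Fin (m + 8), 5 ≤ q.val ∧ 5 ≤ r.val ∧ p ≠ q ∧ p ≠ r ∧ q ≠ r := by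
      by_cases ha : p.val = 5
      · refine ⟨⟨6, by omega⟩, ⟨7, by omega⟩, ?_, ?_, ?_, ?_, ?_⟩ <;>
          simp [Fin.ext_iff] <;> omega
      by_cases hb : p.val = 6
      · refine ⟨⟨5, by omega⟩, ⟨7, by omega⟩, ?_, ?_, ?_, ?_, ?_⟩ <;>
          simp [Fin.ext_iff] <;> omega
      · refine ⟨⟨5, by omega⟩, ⟨6, by omega⟩, ?_, ?_, ?_, ?_, ?_⟩ <;>
          simp [Fin.ext_iff] <;> omega
    set c : Perm (Fin (m + 8)) := swap p q * swap q r with hcdef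
    have hsc : sign c = 1 := by
      rw [hcdef, map_mul, sign_swap hpq, sign_swap hqr]; decide
    have htc : IsTail c := by
      intro w hw
      have hwp : w ≠ p := fun h => by rw [h] at hw; omega
      have hwq : w ≠ q := fun h => by rw [h] at hw; omega
      have hwr : w ≠ r := fun h => by rw [h] at hw; omega
      rw [hcdef, Perm.mul_apply, swap_apply_of_ne_of_ne hwq hwr,
        swap_apply_of_ne_of_ne hwp hwq]
    have hmem : ι m 1 * θ m (sign (1 : Perm (Fin 3))) * c ∈ bad m :=
      ⟨1, c, hsc, htc, rfl⟩
    have hfix := hp _ hmem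
    rw [map_one, map_one, theta_one, one_mul, one_mul, hcdef, Perm.mul_apply,
      swap_apply_of_ne_of_ne hpq hpr, swap_apply_left] at hfix
    exact hpq hfix.symm

lemma exists_bad_ge8 (m : ℕ) :
    ∃ G : Subgroup (Perm (Fin (m + 8))), G ≤ alternatingGroup (Fin (m + 8)) ∧
      (∀ g ∈ G, ∃ i, g i = i) ∧ ¬ ∃ i, ∀ g ∈ G, g i = i :=
  ⟨bad m, bad_le_alternating m, bad_fp m, bad_no_common m⟩

end AltFixAux

namespace AltFixAux

/-- Build the counterexample package from an explicit list of permutations. -/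
lemma exists_bad_ofList {α : Type*} [DecidableEq α] [Fintype α] (L : List (Perm α))
    (h1 : (1 : Perm α) ∈ L) (hmul : ∀ a ∈ L, ∀ b ∈ L, a * b ∈ L)
    (hinv : ∀ a ∈ L, a⁻¹ ∈ L) (hsign : ∀ g ∈ L, sign g = 1)
    (hfp : ∀ g ∈ L, ∃ i, g i = i) (hnc : ∀ i, ∃ g ∈ L, g i ≠ i) :
    ∃ G : Subgroup (Perm α), G ≤ alternatingGroup α ∧
      (∀ g ∈ G, ∃ i, g i = i) ∧ ¬ ∃ i, ∀ g ∈ G, g i = i := by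
  refine ⟨{ carrier := {g | g ∈ L}
            one_mem' := h1
            mul_mem' := fun ha hb => hmul _ ha _ hb
            inv_mem' := fun ha => hinv _ ha }, ?_, ?_, ?_⟩
  · intro g hg
    exact Equiv.Perm.mem_alternatingGroup.mpr (hsign g hg)
  · exact hfp
  · rintro ⟨i, hi⟩
    obtain ⟨g, hg, hne⟩ := hnc i
    exact hne (hi g hg)

def L5 : List (Perm (Fin 5)) :=
  [1, swap 2 3 * swap 3 4, swap 2 4 * swap 3 4,
   swap 0 1 * swap 2 3, swap 0 1 * swap 2 4, swap 0 1 * swap 3 4]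

def L6 : List (Perm (Fin 6)) :=
  [1, swap 1 3 * swap 2 5, swap 0 4 * swap 2 5, swap 0 4 * swap 1 3]

def L7 : List (Perm (Fin 7)) :=
  [1,
   swap 1 4 * swap 4 6 * (swap 2 3 * swap 3 5),
   swap 1 6 * swap 6 4 * (swap 2 5 * swap 5 3),
   swap 0 2 * swap 3 5,
   swap 0 2 * swap 2 5 * (swap 1 4 * swap 4 6),
   swap 0 2 * swap 2 3 * (swap 1 6 * swap 6 4),
   swap 0 3 * swap 2 5,
   swap 0 3 * swap 3 2 * (swap 1 4 * swap 4 6),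
   swap 0 3 * swap 3 5 * (swap 1 6 * swap 6 4),
   swap 0 5 * swap 2 3,
   swap 0 5 * swap 5 3 * (swap 1 4 * swap 4 6),
   swap 0 5 * swap 5 2 * (swap 1 6 * swap 6 4)]

set_option maxHeartbeats 2000000 in
lemma exists_bad (n : ℕ) (hn : 5 ≤ n) :
    ∃ G : Subgroup (Perm (Fin n)), G ≤ alternatingGroup (Fin n) ∧
      (∀ g ∈ G, ∃ i, g i = i) ∧ ¬ ∃ i, ∀ g ∈ G, g i = i := by
  rcases Nat.lt_or_ge n 8 with h8 | h8
  · interval_cases n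
    · exact exists_bad_ofList L5 (by decide)
        (by intro a ha b hb; fin_cases ha <;> fin_cases hb <;> decide)
        (by intro a ha; fin_cases ha <;> decide)
        (by intro g hg; fin_cases hg <;> decide)
        (by intro g hg; fin_cases hg <;> decide)
        (by decide)
    · exact exists_bad_ofList L6 (by decide)
        (by intro a ha b hb; fin_cases ha <;> fin_cases hb <;> decide)
        (by intro a ha; fin_cases ha <;> decide)
        (by intro g hg; fin_cases hg <;> decide)
        (by intro g hg; fin_cases hg <;> decide)
        (by decide)
    · exact exists_bad_ofList L7 (by decide)
        (by intro a ha b hb; fin_cases ha <;> fin_cases hb <;> decide)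
        (by intro a ha; fin_cases ha <;> decide)
        (by intro g hg; fin_cases hg <;> decide)
        (by intro g hg; fin_cases hg <;> decide)
        (by decide)
  · obtain ⟨m, rfl⟩ : ∃ m, n = m + 8 := ⟨n - 8, by omega⟩
    exact exists_bad_ge8 m

end AltFixAux


/-- The alternating group `𝒜ₙ` acting on `{1,…,n}` (here `Fin n`) is fixating
if and only if `n ≤ 4`: every subgroup of the alternating group in which each
permutation has a fixed point has a common fixed point, iff `n ≤ 4`. -/
theorem alternating_group_fixating_iff_le_four
    (n : ℕ) (hn : 1 ≤ n) :
    (∀ G : Subgroup (Equiv.Perm (Fin n)), G ≤ alternatingGroup (Fin n) →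
      (∀ g ∈ G, ∃ i : Fin n, g i = i) → ∃ i : Fin n, ∀ g ∈ G, g i = i) ↔ n ≤ 4 := by
  constructor
  · intro H
    by_contra hgt
    push_neg at hgt
    obtain ⟨G, h1, h2, h3⟩ := AltFixAux.exists_bad n (by omega)
    exact h3 (H G h1 h2)
  · intro hle G hG hGAF
    interval_cases n
    · have key : ∀ g : Equiv.Perm (Fin 1), g 0 = 0 := by decide
      exact ⟨0, fun g _ => key g⟩
    · have key : ∀ g : Equiv.Perm (Fin 2), Equiv.Perm.sign g = 1 → g 0 = 0 := by decide
      exact ⟨0, fun g hg => key g (Equiv.Perm.mem_alternatingGroup.mp (hG hg))⟩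
    · have key : ∀ g : Equiv.Perm (Fin 3), Equiv.Perm.sign g = 1 →
          (∃ p, g p = p) → g 0 = 0 := by decide
      exact ⟨0, fun g hg =>
        key g (Equiv.Perm.mem_alternatingGroup.mp (hG hg)) (hGAF g hg)⟩
    · have key : ∀ g h : Equiv.Perm (Fin 4), Equiv.Perm.sign g = 1 →
          Equiv.Perm.sign h = 1 → g ≠ 1 → (∃ p, g p = p) → (∃ p, h p = p) →
          (∃ p, (g * h) p = p) → (∃ p, (g * h⁻¹) p = p) →
          ∀ p, g p = p → h p = p := by
            set_option synthInstance.maxHeartbeats 400000 in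
            set_option synthInstance.maxSize 1000 in decide
      by_cases hb : ∀ g ∈ G, g = (1 : Equiv.Perm (Fin 4))
      · exact ⟨0, fun g hg => by rw [hb g hg]; rfl⟩
      · push_neg at hb
        obtain ⟨g₀, hg₀, hg₀ne⟩ := hb
        obtain ⟨p, hp⟩ := hGAF g₀ hg₀
        refine ⟨p, fun h hh => ?_⟩
        exact key g₀ h (Equiv.Perm.mem_alternatingGroup.mp (hG hg₀))
          (Equiv.Perm.mem_alternatingGroup.mp (hG hh)) hg₀ne ⟨p, hp⟩ (hGAF h hh)
          (hGAF _ (G.mul_mem hg₀ hh)) (hGAF _ (G.mul_mem hg₀ (G.inv_mem hh))) p hp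
end

section
/- For every integer n ≥ 1, the group of isometries of the lattice ℤⁿ with the Euclidean distance is fixating: if G is a group of bijections of ℤⁿ each of which preserves the Euclidean distance (equivalently, ∑ᵢ (g(x)ᵢ − g(y)ᵢ)² = ∑ᵢ (xᵢ − yᵢ)² for all x, y ∈ ℤⁿ and g ∈ G), and every element of G has a fixed point in ℤⁿ, then there is a point of ℤⁿ fixed by all elements of G. -/
lemma sum_sq_eq_one (n : ℕ) (v : Fin n → ℤ) (h : ∑ j, v j ^ 2 = 1) :
    ∃ k, (v k = 1 ∨ v k = -1) ∧ ∀ l, l ≠ k → v l = 0 := by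
  have hex : ∃ k, v k ≠ 0 := by
    by_contra h0
    push_neg at h0
    simp [h0] at h
  obtain ⟨k, hk⟩ := hex
  have hle : v k ^ 2 ≤ 1 :=
    h ▸ Finset.single_le_sum (fun i _ => sq_nonneg (v i)) (Finset.mem_univ k)
  have hge : 1 ≤ v k ^ 2 := by
    have : v k ≤ -1 ∨ 1 ≤ v k := by omega
    rcases this with h'|h' <;> nlinarith
  have hk2 : v k ^ 2 = 1 := le_antisymm hle hge
  have hsum := Finset.add_sum_erase Finset.univ (fun j => v j ^ 2) (Finset.mem_univ k)
  have hrest : ∑ j ∈ Finset.univ.erase k, v j ^ 2 = 0 := by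
    linarith [hsum, h, hk2]
  refine ⟨k, ?_, ?_⟩
  · rw [sq] at hk2; exact mul_self_eq_one_iff.mp hk2
  · intro l hl
    have hmem : l ∈ Finset.univ.erase k := Finset.mem_erase.mpr ⟨hl, Finset.mem_univ l⟩
    have := (Finset.sum_eq_zero_iff_of_nonneg (fun i _ => sq_nonneg (v i))).mp hrest l hmem
    exact pow_eq_zero_iff (two_ne_zero) |>.mp this

lemma affine_of_isometry (n : ℕ) (f : Equiv.Perm (Fin n → ℤ))
    (hf : ∀ x y : Fin n → ℤ, ∑ i : Fin n, (f x i - f y i) ^ 2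
        = ∑ i : Fin n, (x i - y i) ^ 2) :
    ∃ (σ : Equiv.Perm (Fin n)) (ε : Fin n → ℤ),
      (∀ j, ε j = 1 ∨ ε j = -1) ∧ ∀ (x : Fin n → ℤ) (j : Fin n),
        f x j = ε j * x (σ.symm j) + f 0 j := by
  classical
  have hQ : ∀ x : Fin n → ℤ, ∑ i, (f x i - f 0 i) ^ 2 = ∑ i, x i ^ 2 := by
    intro x; simpa using hf x 0
  have e1 : ∀ (w z : Fin n → ℤ), ∑ i, (w i - z i) ^ 2
      = ∑ i, w i ^ 2 + ∑ i, z i ^ 2 - 2 * ∑ i, w i * z i := by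
    intro w z
    rw [Finset.mul_sum, ← Finset.sum_add_distrib, ← Finset.sum_sub_distrib]
    exact Finset.sum_congr rfl fun i _ => by ring
  have hip : ∀ x y : Fin n → ℤ,
      ∑ i, (f x i - f 0 i) * (f y i - f 0 i) = ∑ i, x i * y i := by
    intro x y
    have h4 : ∑ i, ((f x i - f 0 i) - (f y i - f 0 i)) ^ 2 = ∑ i, (x i - y i) ^ 2 := by
      simpa [sub_sub_sub_cancel_right] using hf x y
    have h5 := e1 (fun i => f x i - f 0 i) (fun i => f y i - f 0 i)
    have h6 := e1 x y
    rw [h4, h6, hQ x, hQ y] at h5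
    linarith
  set e : Fin n → Fin n → ℤ := fun i => Pi.single i 1 with he_def
  have he : ∀ i, ∑ j, (f (e i) j - f 0 j) ^ 2 = 1 := by
    intro i
    rw [hQ]
    have hterm : ∀ j, (e i j) ^ 2 = if j = i then 1 else 0 := by
      intro j
      simp only [he_def, Pi.single_apply]
      split <;> norm_num
    rw [Finset.sum_congr rfl fun j _ => hterm j]
    simp
  choose σ₀ hσ₀ using fun i => sum_sq_eq_one n _ (he i)
  have hev : ∀ (x : Fin n → ℤ) (i : Fin n),
      f x (σ₀ i) - f 0 (σ₀ i) = (f (e i) (σ₀ i) - f 0 (σ₀ i)) * x i := by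
    intro x i
    have h1 : ∑ j, (f x j - f 0 j) * (f (e i) j - f 0 j) = x i := by
      rw [hip]
      have hterm : ∀ j, x j * e i j = if j = i then x i else 0 := by
        intro j
        by_cases h : j = i
        · subst h; simp [he_def]
        · simp [he_def, Pi.single_apply, h]
      rw [Finset.sum_congr rfl fun j _ => hterm j]
      simp
    have h2 : ∑ j, (f x j - f 0 j) * (f (e i) j - f 0 j)
        = (f x (σ₀ i) - f 0 (σ₀ i)) * (f (e i) (σ₀ i) - f 0 (σ₀ i)) := by
      apply Finset.sum_eq_single
      · intro l _ hl; rw [(hσ₀ i).2 l hl, mul_zero]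
      · intro h; exact absurd (Finset.mem_univ _) h
    have h7 : (f x (σ₀ i) - f 0 (σ₀ i)) * (f (e i) (σ₀ i) - f 0 (σ₀ i)) = x i :=
      h2.symm.trans h1
    rcases (hσ₀ i).1 with h3 | h3 <;> rw [h3] at h7 ⊢ <;> linarith
  have hinj : Function.Injective σ₀ := by
    intro i i' hii
    by_contra hne
    have h8 := hev (e i) i'
    rw [← hii] at h8
    have hz : e i i' = 0 := by
      rw [he_def]; exact Pi.single_eq_of_ne (Ne.symm hne) 1
    rw [hz, mul_zero] at h8
    rcases (hσ₀ i).1 with h3 | h3 <;> omega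
  have hbij := Finite.injective_iff_bijective.mp hinj
  let σ : Equiv.Perm (Fin n) := Equiv.ofBijective σ₀ hbij
  refine ⟨σ, fun j => f (e (σ.symm j)) j - f 0 j, ?_, ?_⟩
  · intro j
    have h9 : σ₀ (σ.symm j) = j := σ.apply_symm_apply j
    have := (hσ₀ (σ.symm j)).1
    rwa [h9] at this
  · intro x j
    have h9 : σ₀ (σ.symm j) = j := σ.apply_symm_apply j
    have := hev x (σ.symm j)
    rw [h9] at this
    simp only []
    linarith


lemma signed_perm_uniq (n : ℕ) (σ σ' : Equiv.Perm (Fin n)) (ε ε' c c' : Fin n → ℤ)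
    (hε : ∀ j, ε j = 1 ∨ ε j = -1) (hε' : ∀ j, ε' j = 1 ∨ ε' j = -1)
    (h : ∀ (x : Fin n → ℤ) (j : Fin n),
      ε j * x (σ.symm j) + c j = ε' j * x (σ'.symm j) + c' j) :
    ∀ j, σ.symm j = σ'.symm j ∧ ε j = ε' j ∧ c j = c' j := by
  classical
  intro j
  have hc : c j = c' j := by have := h 0 j; simpa using this
  have h1 := h (Pi.single (σ.symm j) 1) j
  rw [Pi.single_eq_same] at h1
  by_cases hs : σ'.symm j = σ.symm j
  · rw [hs, Pi.single_eq_same] at h1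
    exact ⟨hs.symm, by linarith, hc⟩
  · rw [Pi.single_eq_of_ne hs] at h1
    exfalso
    rcases hε j with h'|h' <;> omega

/-- The group of isometries of the lattice `ℤⁿ` with the Euclidean distance is
fixating: if `G` is a group of bijections of `ℤⁿ` each preserving the squared
Euclidean distance, and every element of `G` has a fixed point, then some
point of `ℤⁿ` is fixed by all elements of `G`. -/
theorem isom_lattice_Zn_fixating
    (n : ℕ) (hn : 1 ≤ n)
    (G : Subgroup (Equiv.Perm (Fin n → ℤ)))
    (hiso : ∀ g ∈ G, ∀ x y : Fin n → ℤ,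
      ∑ i : Fin n, (g x i - g y i) ^ 2 = ∑ i : Fin n, (x i - y i) ^ 2)
    (hGAF : ∀ g ∈ G, ∃ x : Fin n → ℤ, g x = x) :
    ∃ x : Fin n → ℤ, ∀ g ∈ G, g x = x := by
  classical
  have hdata : ∀ g : G, ∃ (σ : Equiv.Perm (Fin n)) (ε : Fin n → ℤ),
      (∀ j, ε j = 1 ∨ ε j = -1) ∧
      ∀ (x : Fin n → ℤ) (j : Fin n),
        (g : Equiv.Perm (Fin n → ℤ)) x j
          = ε j * x (σ.symm j) + (g : Equiv.Perm (Fin n → ℤ)) 0 j :=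
    fun g => affine_of_isometry n g (hiso g g.2)
  choose σ ε hsign hform using hdata
  -- composition laws
  have hcomp : ∀ (g h : G) (j : Fin n),
      (σ (g * h)).symm j = (σ h).symm ((σ g).symm j) ∧
      ε (g * h) j = ε g j * ε h ((σ g).symm j) ∧
      (↑(g * h) : Equiv.Perm (Fin n → ℤ)) 0 j
        = ε g j * (↑h : Equiv.Perm (Fin n → ℤ)) 0 ((σ g).symm j)
          + (↑g : Equiv.Perm (Fin n → ℤ)) 0 j := by
    intro g h j
    have hmulsymm : ∀ i, (σ g * σ h).symm i = (σ h).symm ((σ g).symm i) :=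
      fun i => rfl
    have h2 : ∀ (x : Fin n → ℤ) (i : Fin n),
        (↑(g * h) : Equiv.Perm (Fin n → ℤ)) x i
          = (ε g i * ε h ((σ g).symm i)) * x ((σ g * σ h).symm i)
            + (ε g i * (↑h : Equiv.Perm (Fin n → ℤ)) 0 ((σ g).symm i)
               + (↑g : Equiv.Perm (Fin n → ℤ)) 0 i) := by
      intro x i
      have hgh : (↑(g * h) : Equiv.Perm (Fin n → ℤ)) x
          = (↑g : Equiv.Perm (Fin n → ℤ)) ((↑h : Equiv.Perm (Fin n → ℤ)) x) := by
        simp [Equiv.Perm.mul_apply]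
      rw [hgh, hform g, hform h, hmulsymm]
      ring
    have hε' : ∀ i, ε g i * ε h ((σ g).symm i) = 1
        ∨ ε g i * ε h ((σ g).symm i) = -1 := by
      intro i
      rcases hsign g i with h1|h1 <;> rcases hsign h ((σ g).symm i) with h2|h2 <;>
        simp [h1, h2]
    have := signed_perm_uniq n (σ (g * h)) (σ g * σ h) (ε (g * h))
      (fun i => ε g i * ε h ((σ g).symm i))
      (fun i => (↑(g * h) : Equiv.Perm (Fin n → ℤ)) 0 i)
      (fun i => ε g i * (↑h : Equiv.Perm (Fin n → ℤ)) 0 ((σ g).symm i)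
        + (↑g : Equiv.Perm (Fin n → ℤ)) 0 i)
      (hsign _) hε'
      (fun x i => (hform (g * h) x i).symm.trans (h2 x i)) j
    exact ⟨this.1.trans (hmulsymm j), this.2.1, this.2.2⟩
  -- identity
  have hone : ∀ j, (σ 1).symm j = j := by
    intro j
    have h2 : ∀ (x : Fin n → ℤ) (i : Fin n),
        (↑(1 : G) : Equiv.Perm (Fin n → ℤ)) x i
          = (1 : ℤ) * x ((1 : Equiv.Perm (Fin n)).symm i)
            + (↑(1 : G) : Equiv.Perm (Fin n → ℤ)) 0 i := by
      intro x i; simp [Equiv.Perm.one_symm]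
    have := signed_perm_uniq n (σ 1) 1 (ε 1) (fun _ => 1)
      (fun i => (↑(1 : G) : Equiv.Perm (Fin n → ℤ)) 0 i)
      (fun i => (↑(1 : G) : Equiv.Perm (Fin n → ℤ)) 0 i)
      (hsign 1) (fun _ => Or.inl rfl)
      (fun x i => (hform 1 x i).symm.trans (h2 x i)) j
    simpa [Equiv.Perm.one_symm] using this.1
  have hσ1 : ∀ j, σ 1 j = j := by
    intro j
    have := hone (σ 1 j)
    rw [Equiv.symm_apply_apply] at this
    exact this.symm
  have hcompσ : ∀ (g h : G) (i : Fin n), σ (g * h) i = σ g (σ h i) := by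
    intro g h i
    have h1 := (hcomp g h (σ (g * h) i)).1
    rw [Equiv.symm_apply_apply] at h1
    have h2 := congrArg (σ h) h1
    rw [Equiv.apply_symm_apply] at h2
    have h3 := congrArg (σ g) h2
    rw [Equiv.apply_symm_apply] at h3
    exact h3.symm
  have hinvσ : ∀ (g : G) (j : Fin n), σ g⁻¹ j = (σ g).symm j := by
    intro g j
    have h1 : σ (g * g⁻¹) j = σ g (σ g⁻¹ j) := hcompσ g g⁻¹ j
    rw [mul_inv_cancel, hσ1 j] at h1
    have := congrArg (σ g).symm h1
    rw [Equiv.symm_apply_apply] at this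
    exact this.symm
  -- orbit setoid on coordinates
  let r : Fin n → Fin n → Prop := fun j k => ∃ g : G, σ g j = k
  have hrefl : ∀ j, r j j := fun j => ⟨1, hσ1 j⟩
  have hsymmr : ∀ {j k}, r j k → r k j := by
    rintro j k ⟨g, hg⟩
    exact ⟨g⁻¹, by rw [hinvσ, ← hg, Equiv.symm_apply_apply]⟩
  have htrans : ∀ {j k l}, r j k → r k l → r j l := by
    rintro j k l ⟨g, hg⟩ ⟨g', hg'⟩
    exact ⟨g' * g, by rw [hcompσ, hg, hg']⟩
  let s : Setoid (Fin n) := ⟨r, ⟨hrefl, hsymmr, htrans⟩⟩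
  let rep : Fin n → Fin n := fun j => (Quotient.mk s j).out
  have hrep1 : ∀ j, ∃ g : G, σ g (rep j) = j :=
    fun j => Quotient.exact (Quotient.out_eq (Quotient.mk s j))
  have hrep2 : ∀ (g : G) (j : Fin n), rep (σ g j) = rep j := by
    intro g j
    have hq : Quotient.mk s (σ g j) = Quotient.mk s j :=
      Quotient.sound (hsymmr ⟨g, rfl⟩)
    simpa [rep] using congrArg Quotient.out hq
  choose gj hgj using hrep1
  -- reflector predicate and base point
  let Rf : Fin n → Prop := fun ρ => ∃ h : G, σ h ρ = ρ ∧ ε h ρ = -1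
  let base : Fin n → ℤ := fun j =>
    if c : Rf (rep j) then
      (hGAF (↑(c.choose) : Equiv.Perm (Fin n → ℤ)) c.choose.2).choose (rep j)
    else 0
  let xx : Fin n → ℤ := fun j =>
    ε (gj j) j * base j + (↑(gj j) : Equiv.Perm (Fin n → ℤ)) 0 j
  -- translation part vanishes for positively-fixing elements
  have hpos : ∀ (k : G) (ρ : Fin n), σ k ρ = ρ → ε k ρ = 1 →
      (↑k : Equiv.Perm (Fin n → ℤ)) 0 ρ = 0 := by
    intro k ρ h1 h2
    obtain ⟨y, hy⟩ := hGAF (↑k) k.2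
    have h3 := hform k y ρ
    have hs : (σ k).symm ρ = ρ := by
      have := congrArg (σ k).symm h1
      rw [Equiv.symm_apply_apply] at this
      exact this.symm
    rw [hy, hs, h2, one_mul] at h3
    linarith
  -- key well-definedness lemma
  have key : ∀ (j : Fin n) (g₁ g₂ : G), σ g₁ (rep j) = j → σ g₂ (rep j) = j →
      ε g₁ j * base j + (↑g₁ : Equiv.Perm (Fin n → ℤ)) 0 j
        = ε g₂ j * base j + (↑g₂ : Equiv.Perm (Fin n → ℤ)) 0 j := by
    intro j g₁ g₂ h1 h2
    have hsymm2 : (σ g₂).symm j = rep j := by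
      have := congrArg (σ g₂).symm h2
      rw [Equiv.symm_apply_apply] at this
      exact this.symm
    have hgk : g₂ * (g₂⁻¹ * g₁) = g₁ := by group
    set k := g₂⁻¹ * g₁ with hkdef
    have hσk : σ k (rep j) = rep j := by
      have hh := hcompσ g₂ k (rep j)
      rw [hgk, h1] at hh
      have h5 := congrArg (σ g₂).symm hh
      rw [Equiv.symm_apply_apply, hsymm2] at h5
      exact h5.symm
    have hε1 : ε g₁ j = ε g₂ j * ε k (rep j) := by
      have := (hcomp g₂ k j).2.1
      rw [hgk, hsymm2] at this
      exact this
    have hb1 : (↑g₁ : Equiv.Perm (Fin n → ℤ)) 0 j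
        = ε g₂ j * (↑k : Equiv.Perm (Fin n → ℤ)) 0 (rep j)
          + (↑g₂ : Equiv.Perm (Fin n → ℤ)) 0 j := by
      have := (hcomp g₂ k j).2.2
      rw [hgk, hsymm2] at this
      exact this
    rcases hsign k (rep j) with hek | hek
    · rw [hε1, hb1, hek, hpos k (rep j) hσk hek]
      ring
    · have hRf : Rf (rep j) := ⟨k, hσk, hek⟩
      have hbj : base j
          = (hGAF (↑(hRf.choose) : Equiv.Perm (Fin n → ℤ)) hRf.choose.2).choose (rep j) := by
        simp only [base]
        rw [dif_pos hRf]
      have hspec := hRf.choose_spec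
      set y₀ := (hGAF (↑(hRf.choose) : Equiv.Perm (Fin n → ℤ)) hRf.choose.2).choose
        with hy₀def
      have hy₀ : (↑(hRf.choose) : Equiv.Perm (Fin n → ℤ)) y₀ = y₀ :=
        (hGAF (↑(hRf.choose) : Equiv.Perm (Fin n → ℤ)) hRf.choose.2).choose_spec
      have hσs : (σ hRf.choose).symm (rep j) = rep j := by
        have := congrArg (σ hRf.choose).symm hspec.1
        rw [Equiv.symm_apply_apply] at this
        exact this.symm
      have ht : (↑(hRf.choose) : Equiv.Perm (Fin n → ℤ)) 0 (rep j) = 2 * y₀ (rep j) := by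
        have hf0 := hform hRf.choose y₀ (rep j)
        rw [hy₀, hσs, hspec.2] at hf0
        linarith
      have hbk : (↑k : Equiv.Perm (Fin n → ℤ)) 0 (rep j)
          = (↑(hRf.choose) : Equiv.Perm (Fin n → ℤ)) 0 (rep j) := by
        have hk'k : hRf.choose * (hRf.choose⁻¹ * k) = k := by group
        have hσk'' := hcompσ hRf.choose (hRf.choose⁻¹ * k) (rep j)
        rw [hk'k, hσk] at hσk''
        have hσk' : σ (hRf.choose⁻¹ * k) (rep j) = rep j := by
          have h5 := congrArg (σ hRf.choose).symm hσk''
          rw [Equiv.symm_apply_apply, hσs] at h5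
          exact h5.symm
        have hεk' : ε (hRf.choose⁻¹ * k) (rep j) = 1 := by
          have h6 := (hcomp hRf.choose (hRf.choose⁻¹ * k) (rep j)).2.1
          rw [hk'k, hσs, hspec.2, hek] at h6
          linarith
        have h7 := (hcomp hRf.choose (hRf.choose⁻¹ * k) (rep j)).2.2
        rw [hk'k, hσs, hpos _ _ hσk' hεk'] at h7
        rw [h7]
        ring
      rw [hε1, hb1, hek, hbk, ht, hbj]
      ring
  -- conclusion
  refine ⟨xx, fun gP hgP => ?_⟩
  funext j
  set g : G := ⟨gP, hgP⟩ with hgdef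
  show (↑g : Equiv.Perm (Fin n → ℤ)) xx j = xx j
  set j' := (σ g).symm j with hj'
  have hjj' : σ g j' = j := Equiv.apply_symm_apply _ j
  have hrepeq : rep j' = rep j := by
    have := hrep2 g j'
    rw [hjj'] at this
    exact this.symm
  have hbase' : base j' = base j := by
    simp only [base]
    rw [hrepeq]
  have hσh : σ (g * gj j') (rep j) = j := by
    rw [hcompσ, ← hrepeq, hgj j', hjj']
  have hk2 := key j (gj j) (g * gj j') (hgj j) hσh
  have hεh := (hcomp g (gj j') j).2.1
  have hbh := (hcomp g (gj j') j).2.2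
  rw [← hj'] at hεh hbh
  rw [hform g xx j, ← hj']
  simp only [xx]
  rw [hbase']
  linear_combination -hk2 - base j * hεh - hbh
end
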